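/- Fairness–utility total loss bound: let p be a joint distribution on S × A × D factored as p(s,a,d) = p(s) p(a|s) p(d|s,a), fix λ ∈ [0,1], and define q(s,a,d) = p(s) · [λ p(a) + (1−λ) p(a|s)] · p(d|s,a). Then I_q(s, a) + D_KL(p ‖ q) ≤ I_p(s, a), where I_q(s,a) is the mutual information between s and a under the marginal of q. -/

import Mathlib

open Finset

/-- KL divergence between pmfs on `S × A × D` (natural log). -/
noncomputable def KL3 {S A D : Type*} [Fintype S] [Fintype A] [Fintype D]
    (p q : S → A → D → ℝ) : ℝ :=
  ∑ s, ∑ a, ∑ d, p s a d * Real.log (p s a d / q s a d)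

/-- Mutual information of a joint pmf on `S × A` (natural log). -/
noncomputable def MI2 {S A : Type*} [Fintype S] [Fintype A] (r : S → A → ℝ) : ℝ :=
  ∑ s, ∑ a, r s a * Real.log (r s a / ((∑ a', r s a') * (∑ s', r s' a)))

/-- Pointwise key inequality. -/
lemma key_pt (l u r m : ℝ) (hl0 : 0 ≤ l) (hl1 : l ≤ 1) (hu : 0 < u) (hr : 0 < r)
    (hmr : m = l * u + (1 - l) * r) (hm : 0 < m) :
    m * Real.log (m / u) + r * Real.log (r / m) ≤ r * Real.log (r / u) := by
  rw [Real.log_div hm.ne' hu.ne', Real.log_div hr.ne' hm.ne', Real.log_div hr.ne' hu.ne']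
  rcases le_total r u with h | h
  · -- m ≤ u, m ≥ r, log m ≤ log u
    have hmu : m ≤ u := by nlinarith [mul_nonneg (sub_nonneg.2 hl1) (sub_nonneg.2 h)]
    have hrm : r ≤ m := by nlinarith [mul_nonneg hl0 (sub_nonneg.2 h)]
    have hlog : Real.log m ≤ Real.log u := Real.log_le_log hm hmu
    nlinarith [mul_nonneg (sub_nonneg.2 hrm) (sub_nonneg.2 hlog)]
  · have hmu : u ≤ m := by nlinarith [mul_nonneg (sub_nonneg.2 hl1) (sub_nonneg.2 h)]
    have hrm : m ≤ r := by nlinarith [mul_nonneg hl0 (sub_nonneg.2 h)]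
    have hlog : Real.log u ≤ Real.log m := Real.log_le_log hu hmu
    nlinarith [mul_nonneg (sub_nonneg.2 hrm) (sub_nonneg.2 hlog)]

/-- Fairness–utility total loss bound: for
`q(s,a,d) = p(s)[λ p(a) + (1−λ) p(a|s)] p(d|s,a)` with `λ ∈ [0,1]`,
`I_q(s,a) + D_KL(p‖q) ≤ I_p(s,a)`, where `I_q(s,a)` is the mutual information
of the marginal of `q` on `S × A`. -/
theorem stmt9 {S A D : Type*} [Fintype S] [Fintype A] [Fintype D]
    [Nonempty S] [Nonempty A] [Nonempty D]
    (p : S → A → D → ℝ)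
    (hp : ∀ s a d, 0 < p s a d)
    (hsum : ∑ s, ∑ a, ∑ d, p s a d = 1)
    (pS : S → ℝ) (hpS : ∀ s, pS s = ∑ a, ∑ d, p s a d)
    (pA : A → ℝ) (hpA : ∀ a, pA a = ∑ s, ∑ d, p s a d)
    (pAcond : S → A → ℝ)
    (hpAcond : ∀ s a, pAcond s a = (∑ d, p s a d) / pS s)
    (pDcond : S → A → D → ℝ)
    (hpD : ∀ s a d, pDcond s a d = p s a d / (∑ d', p s a d'))
    (l : ℝ) (hl0 : 0 ≤ l) (hl1 : l ≤ 1)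
    (q : S → A → D → ℝ)
    (hq : ∀ s a d, q s a d =
      pS s * (l * pA a + (1 - l) * pAcond s a) * pDcond s a d) :
    MI2 (fun s a => ∑ d, q s a d) + KL3 p q ≤ MI2 (fun s a => ∑ d, p s a d) := by
  classical
  set r : S → A → ℝ := fun s a => ∑ d, p s a d with hr_def
  have hr : ∀ s a, 0 < r s a := fun s a =>
    Finset.sum_pos (fun d _ => hp s a d) Finset.univ_nonempty
  have hpSpos : ∀ s, 0 < pS s := fun s => by
    rw [hpS]; exact Finset.sum_pos (fun a _ => hr s a) Finset.univ_nonempty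
  have hpApos : ∀ a, 0 < pA a := fun a => by
    rw [hpA]; exact Finset.sum_pos (fun s _ => hr s a) Finset.univ_nonempty
  set m : S → A → ℝ := fun s a => l * (pS s * pA a) + (1 - l) * r s a with hm_def
  have hm : ∀ s a, 0 < m s a := by
    intro s a
    have hme : m s a = l * (pS s * pA a) + (1 - l) * r s a := rfl
    have hu := mul_pos (hpSpos s) (hpApos a)
    have := hr s a
    rcases le_total (pS s * pA a) (r s a) with h | h
    · nlinarith [mul_nonneg hl0 (sub_nonneg.2 h)]
    · nlinarith [mul_nonneg (sub_nonneg.2 hl1) (sub_nonneg.2 h)]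
  -- marginal of q equals m
  have hqsum : ∀ s a, (∑ d, q s a d) = m s a := by
    intro s a
    have hD : ∑ d, pDcond s a d = 1 := by
      simp only [hpD]
      rw [← Finset.sum_div, div_self (hr s a).ne']
    calc ∑ d, q s a d
        = pS s * (l * pA a + (1 - l) * pAcond s a) * ∑ d, pDcond s a d := by
          rw [Finset.mul_sum]
          exact Finset.sum_congr rfl fun d _ => hq s a d
      _ = m s a := by
          rw [hD, hpAcond, hm_def]
          field_simp [(hpSpos s).ne']
          ring
  have hfeq : (fun s a => ∑ d, q s a d) = m := funext fun s => funext fun a => hqsum s a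
  -- marginal sums
  have hrS : ∀ s, ∑ a, r s a = pS s := fun s => (hpS s).symm
  have hrA : ∀ a, ∑ s, r s a = pA a := fun a => (hpA a).symm
  have hAsum : ∑ a, pA a = 1 := by
    simp only [hpA]
    rw [Finset.sum_comm]; exact hsum
  have hSsum : ∑ s, pS s = 1 := by
    simp only [hpS]; exact hsum
  have hmS : ∀ s, ∑ a, m s a = pS s := by
    intro s
    simp only [hm_def]
    rw [Finset.sum_add_distrib, ← Finset.mul_sum, ← Finset.mul_sum, ← Finset.mul_sum,
      hAsum, hrS]
    ring
  have hmA : ∀ a, ∑ s, m s a = pA a := by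
    intro a
    simp only [hm_def]
    rw [Finset.sum_add_distrib, ← Finset.mul_sum, ← Finset.sum_mul, hSsum, ← Finset.mul_sum,
      hrA]
    ring
  -- rewrite KL3
  have hKL : KL3 p q = ∑ s, ∑ a, r s a * Real.log (r s a / m s a) := by
    unfold KL3
    refine Finset.sum_congr rfl fun s _ => Finset.sum_congr rfl fun a _ => ?_
    have hratio : ∀ d, p s a d / q s a d = r s a / m s a := by
      intro d
      have hqe : q s a d = m s a * (p s a d / r s a) := by
        rw [hq, hpD, hpAcond, hm_def]
        field_simp [(hpSpos s).ne', (hr s a).ne']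
        rw [show (∑ d, p s a d) = r s a from rfl, mul_div_assoc, div_self (hr s a).ne']
        ring
      rw [hqe]
      field_simp [(hr s a).ne', (hm s a).ne', (hp s a d).ne']
    calc ∑ d, p s a d * Real.log (p s a d / q s a d)
        = ∑ d, p s a d * Real.log (r s a / m s a) := by
          exact Finset.sum_congr rfl fun d _ => by rw [hratio d]
      _ = r s a * Real.log (r s a / m s a) := by rw [← Finset.sum_mul]
  -- rewrite MI2 terms
  have hMIq : MI2 m = ∑ s, ∑ a, m s a * Real.log (m s a / (pS s * pA a)) := by
    unfold MI2
    exact Finset.sum_congr rfl fun s _ => Finset.sum_congr rfl fun a _ => by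
      rw [hmS s, hmA a]
  have hMIp : MI2 r = ∑ s, ∑ a, r s a * Real.log (r s a / (pS s * pA a)) := by
    unfold MI2
    exact Finset.sum_congr rfl fun s _ => Finset.sum_congr rfl fun a _ => by
      rw [hrS s, hrA a]
  rw [hfeq, hMIq, hKL, hMIp, ← Finset.sum_add_distrib]
  refine Finset.sum_le_sum fun s _ => ?_
  rw [← Finset.sum_add_distrib]
  refine Finset.sum_le_sum fun a _ => ?_
  exact key_pt l (pS s * pA a) (r s a) (m s a) hl0 hl1
    (mul_pos (hpSpos s) (hpApos a)) (hr s a) rfl (hm s a)
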